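/- In Subway Shuffle, if a vertex v has the property that every edge of color c incident to v is directed out of v, and v is not occupied by a token of color c, then in every configuration reachable from the current one, v is never occupied by a token of color c. (A token of color c can only arrive at v by traversing a c-colored edge directed into v, and an edge incident to v is reversed only when a token moves into or out of v.) -/
import Mathlib


/-- A Subway Shuffle configuration: a finite directed graph with colored edges
and a partial assignment of colored tokens to vertices. -/
structure Subway (V E C : Type) where
  src : E → V
  dst : E → V
  edgeColor : E → C
  token : V → Option C

/-- A legal move along edge `e`: a token of the edge's color sits on `src e`,
the head `dst e` is unoccupied; the token moves to the head and the edge is reversed. -/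
def MoveVia {V E C : Type} [DecidableEq V] [DecidableEq E]
    (e : E) (c c' : Subway V E C) : Prop :=
  c.token (c.src e) = some (c.edgeColor e) ∧
  c.token (c.dst e) = none ∧
  c'.token = (fun w => if w = c.dst e then some (c.edgeColor e)
                       else if w = c.src e then none else c.token w) ∧
  c'.src = Function.update c.src e (c.dst e) ∧
  c'.dst = Function.update c.dst e (c.src e) ∧
  c'.edgeColor = c.edgeColor

/-- A legal move: a legal move along some edge. -/
def Move {V E C : Type} [DecidableEq V] [DecidableEq E]
    (c c' : Subway V E C) : Prop :=
  ∃ e, MoveVia e c c'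

def SubwayInv {V E C : Type} (v : V) (col : C) (c : Subway V E C) : Prop :=
  (∀ e, c.edgeColor e = col → (c.src e = v ∨ c.dst e = v) → c.src e = v) ∧
  c.token v ≠ some col

lemma inv_step {V E C : Type} [DecidableEq V] [DecidableEq E]
    {v : V} {col : C} {c c' : Subway V E C}
    (hm : Move c c') (hi : SubwayInv v col c) : SubwayInv v col c' := by
  obtain ⟨e, h1, h2, ht, hs, hd, hc⟩ := hm
  obtain ⟨hedge, htok⟩ := hi
  -- key: edge e is not a col-colored edge with an endpoint at v unless both endpoints... 
  have key : c.edgeColor e = col → (c.src e = v ∨ c.dst e = v) → False := by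
    intro hcol hinc
    have hsv := hedge e hcol hinc
    rw [hsv] at h1
    exact htok (hcol ▸ h1)
  constructor
  · intro f hcol hinc
    rw [hc] at hcol
    rw [hs, hd] at hinc
    rw [hs]
    by_cases hfe : f = e
    · subst hfe
      simp only [Function.update_self] at hinc ⊢
      exact absurd hinc.symm (by simpa using key hcol)
    · simp only [Function.update_of_ne hfe] at hinc ⊢
      exact hedge f hcol hinc
  · rw [ht]
    by_cases hdv : v = c.dst e
    · simp only [if_pos hdv]
      intro hcontra
      have hcol : c.edgeColor e = col := by injection hcontra
      exact key hcol (Or.inr hdv.symm)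
    · simp only [if_neg hdv]
      by_cases hsv : v = c.src e
      · simp [hsv]
      · simpa [hsv] using htok

/-- If every edge of color `col` incident to `v` is directed out of `v`, and
`v` is not occupied by a token of color `col`, then in every reachable
configuration `v` is never occupied by a token of color `col`. -/
theorem subway_never_occupied {V E C : Type} [DecidableEq V] [DecidableEq E]
    (c₀ c : Subway V E C) (v : V) (col : C)
    (hout : ∀ e, c₀.edgeColor e = col → (c₀.src e = v ∨ c₀.dst e = v) → c₀.src e = v)
    (hv : c₀.token v ≠ some col)
    (h : Relation.ReflTransGen Move c₀ c) :
    c.token v ≠ some col := by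
  have : SubwayInv v col c := by
    induction h with
    | refl => exact ⟨hout, hv⟩
    | tail _ hm ih => exact inv_step hm ih
  exact this.2
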